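/- Let D and D' be Hermitian Dirac operators with zero diagonal on n vertices which agree on all entries except that D'_{xy} = D'_{yx} = 0 while |D_{xy}| = 1/w with w > 0 (D' is obtained from D by deleting the single edge {x,y} of weight w). Assume the graph G_{D'} is connected. Then |1/d^D(x,y) − 1/d^{D'}(x,y)| ≤ 1/w. -/

import Mathlib

open scoped ENNReal

/-- The operator norm on square matrices induced by the Euclidean (ℓ²) norm. -/
noncomputable def opNorm {ι : Type*} [Finite ι] (M : Matrix ι ι ℂ) : ℝ :=
  letI := Fintype.ofFinite ι
  letI := Classical.decEq ι
  ‖Matrix.toEuclideanCLM (𝕜 := ℂ) M‖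

/-- The commutator `[D, π(a)]` of a matrix with the diagonal matrix of `a`. -/
noncomputable def commD {ι : Type*} [Finite ι] (D : Matrix ι ι ℂ) (a : ι → ℂ) : Matrix ι ι ℂ :=
  letI := Fintype.ofFinite ι
  letI := Classical.decEq ι
  D * Matrix.diagonal a - Matrix.diagonal a * D

/-- Connes' noncommutative distance associated to the Dirac operator `D`. -/
noncomputable def ncDist {ι : Type*} [Finite ι] (D : Matrix ι ι ℂ) (i j : ι) : ℝ≥0∞ :=
  ⨆ (a : ι → ℂ) (_ : opNorm (commD D a) ≤ 1), ENNReal.ofReal ‖a i - a j‖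

/-- The weight of an edge: the inverse of `|D i j|` (infinite if `D i j = 0`). -/
noncomputable def eWeight {ι : Type*} (D : Matrix ι ι ℂ) (u v : ι) : ℝ≥0∞ :=
  (ENNReal.ofReal ‖D u v‖)⁻¹

/-- Adjacency in the graph `G_D`. -/
def Adjac {ι : Type*} (D : Matrix ι ι ℂ) (u v : ι) : Prop := u ≠ v ∧ D u v ≠ 0

/-- The length of a walk `i :: p` computed with weights `eWeight D`. -/
noncomputable def walkLength {ι : Type*} (D : Matrix ι ι ℂ) : ι → List ι → ℝ≥0∞
  | _, [] => 0
  | u, v :: rest => eWeight D u v + walkLength D v rest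

/-- `i :: p` is a walk from `i` to `j` in the graph `G_D`. -/
def IsWalk {ι : Type*} (D : Matrix ι ι ℂ) (i j : ι) (p : List ι) : Prop :=
  List.Chain (Adjac D) i p ∧ (i :: p).getLast (List.cons_ne_nil _ _) = j

/-- `i` and `j` lie in the same connected component of `G_D`. -/
def Conn {ι : Type*} (D : Matrix ι ι ℂ) (i j : ι) : Prop := ∃ p, IsWalk D i j p

/-- The geodesic (weighted shortest-path) distance on `G_D`. -/
noncomputable def gDist {ι : Type*} (D : Matrix ι ι ℂ) (i j : ι) : ℝ≥0∞ :=
  ⨅ (p : List ι) (_ : IsWalk D i j p), walkLength D i p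

section Aux

variable {ι : Type*} [Fintype ι] [DecidableEq ι]

lemma opNorm_eq (M : Matrix ι ι ℂ) :
    opNorm M = ‖Matrix.toEuclideanCLM (𝕜 := ℂ) M‖ := by
  unfold opNorm; congr!

lemma commD_eq (D : Matrix ι ι ℂ) (a : ι → ℂ) :
    commD D a = D * Matrix.diagonal a - Matrix.diagonal a * D := by
  unfold commD; congr!

lemma commD_apply (D : Matrix ι ι ℂ) (a : ι → ℂ) (i j : ι) :
    commD D a i j = D i j * (a j - a i) := by
  rw [commD_eq]
  simp only [Matrix.sub_apply, Matrix.mul_diagonal, Matrix.diagonal_mul]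
  ring

lemma commD_smul (D : Matrix ι ι ℂ) (a : ι → ℂ) (c : ℂ) :
    commD D (c • a) = c • commD D a := by
  ext i j
  simp only [commD_apply, Matrix.smul_apply, Pi.smul_apply, smul_eq_mul]
  ring

lemma commD_add_left (D D' : Matrix ι ι ℂ) (a : ι → ℂ) :
    commD (D + D') a = commD D a + commD D' a := by
  ext i j
  simp only [commD_apply, Matrix.add_apply]
  ring

set_option synthInstance.maxHeartbeats 1000000 in
lemma opNorm_smul (M : Matrix ι ι ℂ) (c : ℂ) :
    opNorm (c • M) = ‖c‖ * opNorm M := by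
  rw [opNorm_eq, opNorm_eq, map_smul]
  exact norm_smul c (Matrix.toEuclideanCLM (𝕜 := ℂ) M)

set_option synthInstance.maxHeartbeats 1000000 in
lemma opNorm_add_le (M N : Matrix ι ι ℂ) :
    opNorm (M + N) ≤ opNorm M + opNorm N := by
  rw [opNorm_eq, opNorm_eq, opNorm_eq, map_add]
  exact norm_add_le _ _

lemma twoEntry_bound (x y : ι) (hxy : x ≠ y)
    (M : Matrix ι ι ℂ)
    (hz : ∀ i j, ¬(i = x ∧ j = y) → ¬(i = y ∧ j = x) → M i j = 0)
    (c : ℝ) (hc : 0 ≤ c) (h1 : ‖M x y‖ ≤ c) (h2 : ‖M y x‖ ≤ c) :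
    opNorm M ≤ c := by
  rw [opNorm_eq]
  apply ContinuousLinearMap.opNorm_le_bound _ hc
  intro v
  have happ : ∀ i, (Matrix.toEuclideanCLM (𝕜 := ℂ) M v) i = ∑ j, M i j * v j := fun _ => rfl
  have hx : (Matrix.toEuclideanCLM (𝕜 := ℂ) M v) x = M x y * v y := by
    rw [happ]
    apply Finset.sum_eq_single_of_mem y (Finset.mem_univ y)
    intro j _ hj
    rw [hz x j (fun h => hj h.2) (fun h => hxy h.1), zero_mul]
  have hy : (Matrix.toEuclideanCLM (𝕜 := ℂ) M v) y = M y x * v x := by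
    rw [happ]
    apply Finset.sum_eq_single_of_mem x (Finset.mem_univ x)
    intro j _ hj
    rw [hz y j (fun h => hxy h.1.symm) (fun h => hj h.2), zero_mul]
  have hoth : ∀ i, i ≠ x → i ≠ y → (Matrix.toEuclideanCLM (𝕜 := ℂ) M v) i = 0 := by
    intro i hix hiy
    rw [happ]
    apply Finset.sum_eq_zero
    intro j _
    rw [hz i j (fun h => hix h.1) (fun h => hiy h.1), zero_mul]
  rw [EuclideanSpace.norm_eq]
  have hsum : ∑ i, ‖(Matrix.toEuclideanCLM (𝕜 := ℂ) M v) i‖ ^ 2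
      = ‖M x y * v y‖ ^ 2 + ‖M y x * v x‖ ^ 2 := by
    rw [← Finset.sum_subset (Finset.subset_univ ({x, y} : Finset ι))
      (by intro i _ hi
          simp only [Finset.mem_insert, Finset.mem_singleton, not_or] at hi
          rw [hoth i hi.1 hi.2]; simp)]
    rw [Finset.sum_pair hxy, hx, hy]
  rw [hsum]
  have hb : ‖M x y * v y‖ ^ 2 + ‖M y x * v x‖ ^ 2 ≤ (c * ‖v‖) ^ 2 := by
    have e1 : ‖M x y * v y‖ ^ 2 ≤ c ^ 2 * ‖v y‖ ^ 2 := by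
      rw [norm_mul, mul_pow]
      gcongr
    have e2 : ‖M y x * v x‖ ^ 2 ≤ c ^ 2 * ‖v x‖ ^ 2 := by
      rw [norm_mul, mul_pow]
      gcongr
    have e3 : ‖v x‖ ^ 2 + ‖v y‖ ^ 2 ≤ ‖v‖ ^ 2 := by
      rw [EuclideanSpace.norm_eq, Real.sq_sqrt (Finset.sum_nonneg fun i _ => sq_nonneg _)]
      rw [show ‖v x‖ ^ 2 + ‖v y‖ ^ 2 = ∑ i ∈ ({x, y} : Finset ι), ‖v i‖ ^ 2 from
        (Finset.sum_pair (f := fun i => ‖v i‖ ^ 2) hxy).symm]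
      apply Finset.sum_le_sum_of_subset_of_nonneg (Finset.subset_univ _)
      intro i _ _
      exact sq_nonneg _
    calc ‖M x y * v y‖ ^ 2 + ‖M y x * v x‖ ^ 2 ≤ c ^ 2 * ‖v y‖ ^ 2 + c ^ 2 * ‖v x‖ ^ 2 :=
          add_le_add e1 e2
      _ = c ^ 2 * (‖v x‖ ^ 2 + ‖v y‖ ^ 2) := by ring
      _ ≤ c ^ 2 * ‖v‖ ^ 2 := by gcongr
      _ = (c * ‖v‖) ^ 2 := by ring
  calc Real.sqrt (‖M x y * v y‖ ^ 2 + ‖M y x * v x‖ ^ 2) ≤ Real.sqrt ((c * ‖v‖) ^ 2) :=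
        Real.sqrt_le_sqrt hb
    _ = c * ‖v‖ := Real.sqrt_sq (by positivity)

/-- Main abstract lemma: perturbing the Dirac operator changes the inverse distance
by at most `c` when the commutator norms differ by at most `c * ‖a x - a y‖`. -/
lemma ncDist_inv_le (D D' : Matrix ι ι ℂ) (x y : ι) (c : ℝ) (hc : 0 ≤ c)
    (hb : ∀ a : ι → ℂ, opNorm (commD D' a) ≤ opNorm (commD D a) + c * ‖a x - a y‖) :
    (ncDist D' x y)⁻¹ ≤ (ncDist D x y)⁻¹ + ENNReal.ofReal c := by
  conv_rhs => rw [ncDist]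
  simp only [ENNReal.inv_iSup]
  rw [ENNReal.iInf_add]
  refine le_iInf fun a => ?_
  rw [ENNReal.iInf_add]
  refine le_iInf fun ha => ?_
  by_cases hs : ‖a x - a y‖ = 0
  · rw [hs]
    simp
  · have hs' : 0 < ‖a x - a y‖ := lt_of_le_of_ne (norm_nonneg _) (Ne.symm hs)
    set s : ℝ := ‖a x - a y‖ with hsdef
    set t : ℝ := 1 + c * s with htdef
    have ht0 : 0 < t := by positivity
    set b : ι → ℂ := ((t : ℂ))⁻¹ • a with hbdef
    have hnorm : ‖((t : ℂ))⁻¹‖ = t⁻¹ := by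
      rw [norm_inv, Complex.norm_real, Real.norm_of_nonneg ht0.le]
    have hnb : opNorm (commD D' b) ≤ 1 := by
      rw [hbdef, commD_smul, opNorm_smul, hnorm]
      have h1 : opNorm (commD D' a) ≤ t := le_trans (hb a) (by rw [htdef]; gcongr)
      calc t⁻¹ * opNorm (commD D' a) ≤ t⁻¹ * t := by
            apply mul_le_mul_of_nonneg_left h1 (by positivity)
        _ = 1 := inv_mul_cancel₀ ht0.ne'
    have hbs : ‖b x - b y‖ = t⁻¹ * s := by
      rw [hbdef]
      simp only [Pi.smul_apply, smul_eq_mul, ← mul_sub]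
      rw [norm_mul, hnorm, hsdef]
    have hle : ENNReal.ofReal (t⁻¹ * s) ≤ ncDist D' x y := by
      rw [← hbs, ncDist]
      exact le_iSup_of_le b (le_iSup_of_le hnb le_rfl)
    calc (ncDist D' x y)⁻¹ ≤ (ENNReal.ofReal (t⁻¹ * s))⁻¹ := ENNReal.inv_le_inv' hle
      _ = ENNReal.ofReal ((t⁻¹ * s)⁻¹) := (ENNReal.ofReal_inv_of_pos (by positivity)).symm
      _ = ENNReal.ofReal (s⁻¹ + c) := by
          congr 1
          rw [htdef]
          field_simp
      _ = ENNReal.ofReal s⁻¹ + ENNReal.ofReal c := ENNReal.ofReal_add (by positivity) hc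
      _ = (ENNReal.ofReal s)⁻¹ + ENNReal.ofReal c := by rw [ENNReal.ofReal_inv_of_pos hs']

end Aux

theorem stmt14 {n : ℕ} (D D' : Matrix (Fin n) (Fin n) ℂ)
    (hherm : D.IsHermitian) (hdiag : ∀ i, D i i = 0)
    (hherm' : D'.IsHermitian) (hdiag' : ∀ i, D' i i = 0)
    (x y : Fin n) (hxy : x ≠ y) (w : ℝ) (hw : 0 < w)
    (habs : ‖D x y‖ = w⁻¹)
    (hzero : D' x y = 0 ∧ D' y x = 0)
    (hagree : ∀ a b : Fin n, ¬ ((a, b) = (x, y) ∨ (a, b) = (y, x)) → D' a b = D a b)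
    (hconn' : ∀ u v, Conn D' u v) :
    (ncDist D x y)⁻¹ ≤ (ncDist D' x y)⁻¹ + ENNReal.ofReal w⁻¹ ∧
    (ncDist D' x y)⁻¹ ≤ (ncDist D x y)⁻¹ + ENNReal.ofReal w⁻¹ := by
  have hDyx : ‖D y x‖ = w⁻¹ := by
    calc ‖D y x‖ = ‖star (D y x)‖ := (norm_star _).symm
      _ = ‖D x y‖ := by rw [hherm.apply x y]
      _ = w⁻¹ := habs
  have key : ∀ (E : Matrix (Fin n) (Fin n) ℂ),
      (∀ i j, ¬(i = x ∧ j = y) → ¬(i = y ∧ j = x) → E i j = 0) →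
      ‖E x y‖ ≤ w⁻¹ → ‖E y x‖ ≤ w⁻¹ →
      ∀ a : Fin n → ℂ, opNorm (commD E a) ≤ w⁻¹ * ‖a x - a y‖ := by
    intro E hsupp h1 h2 a
    apply twoEntry_bound x y hxy _ ?_ _ (by positivity)
    · rw [commD_apply, norm_mul, norm_sub_rev]
      exact mul_le_mul_of_nonneg_right h1 (norm_nonneg _)
    · rw [commD_apply, norm_mul]
      exact mul_le_mul_of_nonneg_right h2 (norm_nonneg _)
    · intro i j hij hji
      rw [commD_apply, hsupp i j hij hji, zero_mul]
  have hsupp1 : ∀ i j : Fin n, ¬(i = x ∧ j = y) → ¬(i = y ∧ j = x) →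
      (D - D') i j = 0 := by
    intro i j hij hji
    rw [Matrix.sub_apply, hagree i j ?_, sub_self]
    rintro (h | h)
    · exact hij ⟨congrArg Prod.fst h, congrArg Prod.snd h⟩
    · exact hji ⟨congrArg Prod.fst h, congrArg Prod.snd h⟩
  have hsupp2 : ∀ i j : Fin n, ¬(i = x ∧ j = y) → ¬(i = y ∧ j = x) →
      (D' - D) i j = 0 := by
    intro i j hij hji
    rw [Matrix.sub_apply, hagree i j ?_, sub_self]
    rintro (h | h)
    · exact hij ⟨congrArg Prod.fst h, congrArg Prod.snd h⟩
    · exact hji ⟨congrArg Prod.fst h, congrArg Prod.snd h⟩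
  have hkey1 := key (D - D') hsupp1
    (by rw [Matrix.sub_apply, hzero.1, sub_zero, habs])
    (by rw [Matrix.sub_apply, hzero.2, sub_zero, hDyx])
  have hkey2 := key (D' - D) hsupp2
    (by rw [Matrix.sub_apply, hzero.1, zero_sub, norm_neg, habs])
    (by rw [Matrix.sub_apply, hzero.2, zero_sub, norm_neg, hDyx])
  have hb1 : ∀ a : Fin n → ℂ,
      opNorm (commD D a) ≤ opNorm (commD D' a) + w⁻¹ * ‖a x - a y‖ := by
    intro a
    have hsplit : commD D a = commD D' a + commD (D - D') a := by
      have hE : D' + (D - D') = D := by abel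
      rw [← commD_add_left, hE]
    rw [hsplit]
    exact le_trans (opNorm_add_le _ _) (add_le_add le_rfl (hkey1 a))
  have hb2 : ∀ a : Fin n → ℂ,
      opNorm (commD D' a) ≤ opNorm (commD D a) + w⁻¹ * ‖a x - a y‖ := by
    intro a
    have hsplit : commD D' a = commD D a + commD (D' - D) a := by
      have hE : D + (D' - D) = D' := by abel
      rw [← commD_add_left, hE]
    rw [hsplit]
    exact le_trans (opNorm_add_le _ _) (add_le_add le_rfl (hkey2 a))
  exact ⟨ncDist_inv_le D' D x y w⁻¹ (by positivity) hb1,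
         ncDist_inv_le D D' x y w⁻¹ (by positivity) hb2⟩
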